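/- For every positive integer k there exists a P2-convex digraph G with bimimw(G) ≥ k; that is, a digraph G whose vertex set is partitioned into (A, B) with every edge having one endpoint in A and the other in B, together with a linear order on A under which, for every b ∈ B, each of N⁺_G(b) and N⁻_G(b) is a set of consecutive elements of A, such that bimimw(G) ≥ k. -/

import Mathlib

open scoped Classical

/-- An induced matching in a digraph with edge relation `D`: a finite set of edges of `D`,
no two of which share an endpoint, such that no edge of `D` joins an endpoint of one
matching edge to an endpoint of a different matching edge. -/
def IsIndMatching {V : Type} (D : V → V → Prop) (M : Finset (V × V)) : Prop :=
  (∀ e ∈ M, D e.1 e.2) ∧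
    ∀ e ∈ M, ∀ f ∈ M, e ≠ f →
      ∀ x, (x = e.1 ∨ x = e.2) → ∀ y, (y = f.1 ∨ y = f.2) → x ≠ y ∧ ¬D x y

/-- `ν(D)`: the maximum size of an induced matching in the digraph `D`. -/
noncomputable def nu {V : Type} (D : V → V → Prop) : ℕ :=
  sSup {n | ∃ M : Finset (V × V), IsIndMatching D M ∧ M.card = n}

/-- The bipartite digraph `G[A→B]`, whose edges are the edges of `E` from `A` to `B`. -/
def cutRel {V : Type} (E : V → V → Prop) (A B : Set V) : V → V → Prop :=
  fun x y => x ∈ A ∧ y ∈ B ∧ E x y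

/-- `bimim_G(A) = ν(G[A→Ā]) + ν(G[Ā→A])`. -/
noncomputable def bimimCut {V : Type} (E : V → V → Prop) (A : Set V) : ℕ :=
  nu (cutRel E A Aᶜ) + nu (cutRel E Aᶜ A)

/-- For an undirected graph `G`, `mim_G(A) = ν(G[A, Ā])`. -/
noncomputable def mimCut {V : Type} (G : SimpleGraph V) (A : Set V) : ℕ :=
  nu (cutRel G.Adj A Aᶜ)
/-- A caterpillar: a tree containing a path such that every vertex outside the path
has a neighbor on the path. -/
def IsCaterpillar {L : Type} (T : SimpleGraph L) : Prop :=
  ∃ (u v : L) (p : T.Walk u v), p.IsPath ∧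
    ∀ w : L, w ∉ p.support → ∃ x ∈ p.support, T.Adj w x

/-- A branch decomposition of a (di)graph on vertex set `V`: a subcubic tree (at least
two vertices, every internal vertex of degree 3) together with a bijection from `V`
to the set of leaves of the tree. -/
structure BranchDecomp (V : Type) where
  L : Type
  finL : Finite L
  T : SimpleGraph L
  isTree : T.IsTree
  two_le : 2 ≤ Nat.card L
  subcubic : ∀ t : L, (T.neighborSet t).ncard = 1 ∨ (T.neighborSet t).ncard = 3
  toLeaf : V → L
  inj : Function.Injective toLeaf
  mem_leaf : ∀ v : V, (T.neighborSet (toLeaf v)).ncard = 1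
  surj : ∀ t : L, (T.neighborSet t).ncard = 1 → ∃ v, toLeaf v = t

/-- The side `A_e` of the cut induced by the tree edge `{t₁, t₂}`: the set of vertices
mapped to leaves in the component of `T - e` containing `t₁`. -/
def BranchDecomp.side {V : Type} (bd : BranchDecomp V) (t₁ t₂ : bd.L) : Set V :=
  {v | (bd.T.deleteEdges {s(t₁, t₂)}).Reachable t₁ (bd.toLeaf v)}

/-- The bi-mim-width of a branch decomposition with respect to a digraph. -/
noncomputable def BranchDecomp.width {V : Type} (bd : BranchDecomp V)
    (E : V → V → Prop) : ℕ :=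
  sSup {n | ∃ t₁ t₂, bd.T.Adj t₁ t₂ ∧ n = bimimCut E (bd.side t₁ t₂)}

/-- The mim-width of a branch decomposition with respect to an undirected graph. -/
noncomputable def BranchDecomp.uwidth {V : Type} (bd : BranchDecomp V)
    (G : SimpleGraph V) : ℕ :=
  sSup {n | ∃ t₁ t₂, bd.T.Adj t₁ t₂ ∧ n = mimCut G (bd.side t₁ t₂)}

/-- The bi-mim-width of a digraph. -/
noncomputable def bimimw {V : Type} (E : V → V → Prop) : ℕ :=
  sInf {n | ∃ bd : BranchDecomp V, bd.width E = n}

/-- The linear bi-mim-width of a digraph. -/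
noncomputable def lbimimw {V : Type} (E : V → V → Prop) : ℕ :=
  sInf {n | ∃ bd : BranchDecomp V, IsCaterpillar bd.T ∧ bd.width E = n}

/-- The mim-width of an undirected graph. -/
noncomputable def mimw {V : Type} (G : SimpleGraph V) : ℕ :=
  sInf {n | ∃ bd : BranchDecomp V, bd.uwidth G = n}

/-- The linear mim-width of an undirected graph. -/
noncomputable def lmimw {V : Type} (G : SimpleGraph V) : ℕ :=
  sInf {n | ∃ bd : BranchDecomp V, IsCaterpillar bd.T ∧ bd.uwidth G = n}

-- chunk 1
lemma isIndMatching_empty {V : Type} (D : V → V → Prop) :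
    IsIndMatching D (∅ : Finset (V × V)) := by
  constructor
  · intro e he; exact absurd he (Finset.notMem_empty e)
  · intro e he; exact absurd he (Finset.notMem_empty e)

lemma nu_bddAbove {V : Type} [Fintype V] (D : V → V → Prop) :
    BddAbove {n | ∃ M : Finset (V × V), IsIndMatching D M ∧ M.card = n} := by
  refine ⟨Fintype.card (V × V), ?_⟩
  rintro n ⟨M, _, rfl⟩
  exact le_trans (Finset.card_le_univ M) (le_of_eq Finset.card_univ)

lemma le_nu {V : Type} [Fintype V] {D : V → V → Prop} {M : Finset (V × V)}
    (h : IsIndMatching D M) : M.card ≤ nu D :=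
  le_csSup (nu_bddAbove D) ⟨M, h, rfl⟩

lemma nu_le_card {V : Type} [Fintype V] (D : V → V → Prop) :
    nu D ≤ Fintype.card (V × V) := by
  have hne : {n | ∃ M : Finset (V × V), IsIndMatching D M ∧ M.card = n}.Nonempty :=
    ⟨0, ∅, isIndMatching_empty D, rfl⟩
  apply csSup_le hne
  rintro n ⟨M, _, rfl⟩
  exact le_trans (Finset.card_le_univ M) (le_of_eq Finset.card_univ)

abbrev VG (r : ℕ) : Type := Fin r ⊕ (Fin r × Fin r)

def EG {r : ℕ} : VG r → VG r → Prop
  | .inl u, .inr p => p.1 = u ∧ p.1 ≠ p.2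
  | .inr p, .inl v => p.2 = v ∧ p.1 ≠ p.2
  | _, _ => False

lemma EG_ll {r : ℕ} (u v : Fin r) : ¬ EG (Sum.inl u) (Sum.inl v) := by intro h; exact h
lemma EG_rr {r : ℕ} (p q : Fin r × Fin r) : ¬ EG (Sum.inr p) (Sum.inr q) := by intro h; exact h
lemma EG_lr {r : ℕ} (u : Fin r) (p : Fin r × Fin r) :
    EG (Sum.inl u) (Sum.inr p) ↔ p.1 = u ∧ p.1 ≠ p.2 := Iff.rfl
lemma EG_rl {r : ℕ} (p : Fin r × Fin r) (v : Fin r) :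
    EG (Sum.inr p) (Sum.inl v) ↔ p.2 = v ∧ p.1 ≠ p.2 := Iff.rfl

-- chunk 2 : greedy extraction
lemma greedy {r : ℕ} (hr : 1 ≤ r) :
    ∀ (j : ℕ) (S : Finset (Fin r × Fin r)), j * (4 * r) ≤ S.card →
      ∃ T ⊆ S, T.card = j ∧
        ∀ p ∈ T, ∀ q ∈ T, p ≠ q → p.1 ≠ q.1 ∧ p.1 ≠ q.2 ∧ p.2 ≠ q.1 ∧ p.2 ≠ q.2 := by
  intro j
  induction j with
  | zero =>
      intro S _
      exact ⟨∅, Finset.empty_subset S, Finset.card_empty, by intro p hp; exact absurd hp (Finset.notMem_empty p)⟩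
  | succ j ih =>
      intro S hS
      have hSpos : 0 < S.card := by
        have : 1 ≤ (j+1) * (4*r) := by nlinarith
        omega
      obtain ⟨p, hp⟩ := Finset.card_pos.mp hSpos
      set good : Fin r × Fin r → Prop :=
        fun q => q.1 ≠ p.1 ∧ q.1 ≠ p.2 ∧ q.2 ≠ p.1 ∧ q.2 ≠ p.2 with hgood
      set S' := S.filter (fun q => good q) with hS'
      have hbadsub : S.filter (fun q => ¬ good q) ⊆
          ((Finset.univ : Finset (Fin r)).image (fun b => (p.1, b))) ∪
          ((Finset.univ : Finset (Fin r)).image (fun b => (p.2, b))) ∪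
          ((Finset.univ : Finset (Fin r)).image (fun b => (b, p.1))) ∪
          ((Finset.univ : Finset (Fin r)).image (fun b => (b, p.2))) := by
        intro q hq
        rw [Finset.mem_filter] at hq
        rcases hq with ⟨-, hq⟩
        simp only [hgood] at hq
        push_neg at hq
        simp only [Finset.mem_union, Finset.mem_image, Finset.mem_univ, true_and]
        by_cases h1 : q.1 = p.1
        · exact Or.inl (Or.inl (Or.inl ⟨q.2, by rw [← h1]⟩))
        · by_cases h2 : q.1 = p.2
          · exact Or.inl (Or.inl (Or.inr ⟨q.2, by rw [← h2]⟩))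
          · by_cases h3 : q.2 = p.1
            · exact Or.inl (Or.inr ⟨q.1, by rw [← h3]⟩)
            · exact Or.inr ⟨q.1, by rw [← (hq h1 h2 h3)]⟩
      have hbadcard : (S.filter (fun q => ¬ good q)).card ≤ 4 * r := by
        calc (S.filter (fun q => ¬ good q)).card
            ≤ _ := Finset.card_le_card hbadsub
          _ ≤ 4 * r := by
              refine le_trans (Finset.card_union_le _ _) ?_
              have h4 : ∀ f : Fin r → Fin r × Fin r,
                  ((Finset.univ : Finset (Fin r)).image f).card ≤ r := by
                intro f
                exact le_trans (Finset.card_image_le) (by simp)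
              refine le_trans (add_le_add (le_trans (Finset.card_union_le _ _)
                (add_le_add (le_trans (Finset.card_union_le _ _)
                  (add_le_add (h4 _) (h4 _))) (h4 _))) (h4 _)) ?_
              omega
      have hsplit : S'.card + (S.filter (fun q => ¬ good q)).card = S.card :=
        Finset.card_filter_add_card_filter_not (fun q => good q)
      have hS'card : j * (4 * r) ≤ S'.card := by
        have hexp : (j+1) * (4*r) = j * (4*r) + 4*r := by ring
        omega
      obtain ⟨T, hTsub, hTcard, hTdisj⟩ := ih S' hS'card
      have hpT : p ∉ T := by
        intro hmem
        have := hTsub hmem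
        rw [hS', Finset.mem_filter, hgood] at this
        exact this.2.1 rfl
      refine ⟨insert p T, ?_, ?_, ?_⟩
      · intro x hx
        rcases Finset.mem_insert.mp hx with rfl | hx
        · exact hp
        · exact (Finset.filter_subset _ S) (hTsub hx)
      · rw [Finset.card_insert_of_notMem hpT, hTcard]
      · intro a ha b hb hab
        have hgd : ∀ x ∈ T, x.1 ≠ p.1 ∧ x.1 ≠ p.2 ∧ x.2 ≠ p.1 ∧ x.2 ≠ p.2 := by
          intro x hx
          have := hTsub hx
          rw [hS', Finset.mem_filter, hgood] at this
          exact this.2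
        rcases Finset.mem_insert.mp ha with ha' | ha'
        · rcases Finset.mem_insert.mp hb with hb' | hb'
          · rw [ha', hb'] at hab; exact absurd rfl hab
          · have := hgd b hb'
            rw [ha']
            exact ⟨fun h => this.1 h.symm, fun h => this.2.2.1 h.symm,
              fun h => this.2.1 h.symm, fun h => this.2.2.2 h.symm⟩
        · rcases Finset.mem_insert.mp hb with hb' | hb'
          · have := hgd a ha'
            rw [hb']
            exact ⟨this.1, this.2.1, this.2.2.1, this.2.2.2⟩
          · exact hTdisj a ha' b hb' hab

-- chunk 3 : case 1 of Lemma B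
lemma lemB_case1 {r k : ℕ} (X : Set (VG r))
    (hX : k ≤ {u : Fin r | Sum.inl u ∈ X}.ncard)
    (hY : k ≤ {u : Fin r | Sum.inl u ∉ X}.ncard) :
    k ≤ nu (cutRel (EG (r := r)) X Xᶜ) := by
  classical
  rw [Set.ncard_eq_toFinset_card'] at hX hY
  obtain ⟨T₁, hT₁sub, hT₁⟩ := Finset.exists_subset_card_eq hX
  obtain ⟨T₂, hT₂sub, hT₂⟩ := Finset.exists_subset_card_eq hY
  let e₁ := T₁.equivFinOfCardEq hT₁
  let e₂ := T₂.equivFinOfCardEq hT₂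
  set u : Fin k → Fin r := fun i => (e₁.symm i : Fin r) with hu_def
  set v : Fin k → Fin r := fun i => (e₂.symm i : Fin r) with hv_def
  have hu : ∀ i, Sum.inl (u i) ∈ X := by
    intro i
    have h0 : (e₁.symm i : Fin r) ∈ T₁ := (e₁.symm i).2
    have := hT₁sub h0
    rwa [Set.mem_toFinset] at this
  have hv : ∀ i, Sum.inl (v i) ∉ X := by
    intro i
    have h0 : (e₂.symm i : Fin r) ∈ T₂ := (e₂.symm i).2
    have := hT₂sub h0
    rwa [Set.mem_toFinset] at this
  have huv : ∀ i j, u i ≠ v j := by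
    intro i j h
    exact hv j (h ▸ hu i)
  have huinj : Function.Injective u := by
    intro i j h
    have : e₁.symm i = e₁.symm j := Subtype.coe_injective h
    exact e₁.symm.injective this
  have hvinj : Function.Injective v := by
    intro i j h
    have : e₂.symm i = e₂.symm j := Subtype.coe_injective h
    exact e₂.symm.injective this
  classical
  set edg : Fin k → (VG r × VG r) := fun i =>
    if Sum.inr (u i, v i) ∈ X then (Sum.inr (u i, v i), Sum.inl (v i))
    else (Sum.inl (u i), Sum.inr (u i, v i)) with hedg
  have hedgmem : ∀ i, (edg i).1 = Sum.inl (u i) ∨ (edg i).1 = Sum.inl (v i) ∨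
      (edg i).1 = Sum.inr (u i, v i) := by
    intro i
    rw [hedg]
    by_cases h : Sum.inr (u i, v i) ∈ X <;> simp [h]
  have hedgmem2 : ∀ i, (edg i).2 = Sum.inl (u i) ∨ (edg i).2 = Sum.inl (v i) ∨
      (edg i).2 = Sum.inr (u i, v i) := by
    intro i
    rw [hedg]
    by_cases h : Sum.inr (u i, v i) ∈ X <;> simp [h]
  have claim : ∀ i j : Fin k, i ≠ j → ∀ x y : VG r,
      (x = Sum.inl (u i) ∨ x = Sum.inl (v i) ∨ x = Sum.inr (u i, v i)) →
      (y = Sum.inl (u j) ∨ y = Sum.inl (v j) ∨ y = Sum.inr (u j, v j)) →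
      x ≠ y ∧ ¬ EG x y := by
    intro i j hij x y hx hy
    have huu : u i ≠ u j := fun h => hij (huinj h)
    have hvv : v i ≠ v j := fun h => hij (hvinj h)
    rcases hx with rfl | rfl | rfl <;> rcases hy with rfl | rfl | rfl
    · exact ⟨by simp [huu], EG_ll _ _⟩
    · exact ⟨by simp [huv i j], EG_ll _ _⟩
    · refine ⟨by simp, ?_⟩
      rw [EG_lr]
      rintro ⟨h, -⟩
      exact huu h.symm
    · refine ⟨?_, EG_ll _ _⟩
      simp only [ne_eq, Sum.inl.injEq]
      intro h; exact huv j i h.symm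
    · exact ⟨by simp [hvv], EG_ll _ _⟩
    · refine ⟨by simp, ?_⟩
      rw [EG_lr]
      rintro ⟨h, -⟩
      exact huv j i h
    · refine ⟨by simp, ?_⟩
      rw [EG_rl]
      rintro ⟨h, -⟩
      exact huv j i h.symm
    · refine ⟨by simp, ?_⟩
      rw [EG_rl]
      rintro ⟨h, -⟩
      exact hvv h
    · refine ⟨?_, EG_rr _ _⟩
      simp only [ne_eq, Sum.inr.injEq, Prod.mk.injEq, not_and]
      intro h; exact absurd h huu
  have hedginj : Function.Injective edg := by
    intro i j h
    by_contra hij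
    have := (claim i j hij (edg i).1 (edg j).1 (hedgmem i) (hedgmem j)).1
    exact this (by rw [h])
  set M : Finset (VG r × VG r) := Finset.univ.image edg with hM
  have hMcard : M.card = k := by
    rw [hM, Finset.card_image_of_injective _ hedginj, Finset.card_univ, Fintype.card_fin]
  have hind : IsIndMatching (cutRel (EG (r := r)) X Xᶜ) M := by
    constructor
    · intro e he
      rw [hM, Finset.mem_image] at he
      obtain ⟨i, -, rfl⟩ := he
      rw [hedg]
      by_cases h : Sum.inr (u i, v i) ∈ X
      · simp only [h, if_pos]
        exact ⟨h, hv i, by rw [EG_rl]; exact ⟨rfl, huv i i⟩⟩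
      · simp only [h, if_neg, not_false_iff]
        exact ⟨hu i, h, by rw [EG_lr]; exact ⟨rfl, huv i i⟩⟩
    · intro e he f hf hef x hxe y hyf
      rw [hM, Finset.mem_image] at he hf
      obtain ⟨i, -, rfl⟩ := he
      obtain ⟨j, -, rfl⟩ := hf
      have hij : i ≠ j := fun h => hef (by rw [h])
      have hx : x = Sum.inl (u i) ∨ x = Sum.inl (v i) ∨ x = Sum.inr (u i, v i) := by
        rcases hxe with rfl | rfl
        · exact hedgmem i
        · exact hedgmem2 i
      have hy : y = Sum.inl (u j) ∨ y = Sum.inl (v j) ∨ y = Sum.inr (u j, v j) := by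
        rcases hyf with rfl | rfl
        · exact hedgmem j
        · exact hedgmem2 j
      obtain ⟨h1, h2⟩ := claim i j hij x y hx hy
      exact ⟨h1, fun hD => h2 hD.2.2⟩
  calc k = M.card := hMcard.symm
    _ ≤ nu _ := le_nu hind

-- chunk 4 : case 2 of Lemma B
lemma lemB_case2 {r k : ℕ} (hk : 1 ≤ k) (hr : r = 30 * k) (W Y : Set (VG r))
    (hWY : ∀ v, v ∈ Y ↔ v ∉ W)
    (hW : r + r * r ≤ 3 * W.ncard)
    (hsmall : {u : Fin r | Sum.inl u ∈ W}.ncard < k) :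
    k ≤ nu (cutRel (EG (r := r)) Y W) := by
  classical
  have hr1 : 1 ≤ r := by omega
  set XA := {u : Fin r | Sum.inl u ∈ W}.toFinset with hXA
  have hXAlt : XA.card < k := by
    rwa [Set.ncard_eq_toFinset_card'] at hsmall
  set G := Finset.univ.filter (fun p : Fin r × Fin r =>
    p.1 ≠ p.2 ∧ Sum.inr p ∈ W ∧ Sum.inl p.1 ∉ W ∧ Sum.inl p.2 ∉ W) with hG
  -- covering bound
  have hcover : W.toFinset ⊆
      (XA.image (Sum.inl : Fin r → VG r)) ∪ ((Finset.univ : Finset (Fin r)).image (fun a => (Sum.inr (a, a) : VG r))) ∪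
      ((XA ×ˢ (Finset.univ : Finset (Fin r))).image (Sum.inr : Fin r × Fin r → VG r)) ∪
      (((Finset.univ : Finset (Fin r)) ×ˢ XA).image (Sum.inr : Fin r × Fin r → VG r)) ∪
      (G.image (Sum.inr : Fin r × Fin r → VG r)) := by
    intro x hx
    rw [Set.mem_toFinset] at hx
    match x with
    | Sum.inl u =>
      refine Finset.mem_union_left _ (Finset.mem_union_left _ (Finset.mem_union_left _ (Finset.mem_union_left _ ?_)))
      exact Finset.mem_image.mpr ⟨u, Set.mem_toFinset.mpr hx, rfl⟩
    | Sum.inr p =>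
      by_cases h1 : p.1 = p.2
      · refine Finset.mem_union_left _ (Finset.mem_union_left _ (Finset.mem_union_left _ (Finset.mem_union_right _ ?_)))
        refine Finset.mem_image.mpr ⟨p.1, Finset.mem_univ _, ?_⟩
        obtain ⟨p1, p2⟩ := p
        cases h1
        rfl
      · by_cases h2 : Sum.inl p.1 ∈ W
        · refine Finset.mem_union_left _ (Finset.mem_union_left _ (Finset.mem_union_right _ ?_))
          exact Finset.mem_image.mpr ⟨p, Finset.mem_product.mpr ⟨Set.mem_toFinset.mpr h2, Finset.mem_univ _⟩, rfl⟩
        · by_cases h3 : Sum.inl p.2 ∈ W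
          · refine Finset.mem_union_left _ (Finset.mem_union_right _ ?_)
            exact Finset.mem_image.mpr ⟨p, Finset.mem_product.mpr ⟨Finset.mem_univ _, Set.mem_toFinset.mpr h3⟩, rfl⟩
          · refine Finset.mem_union_right _ ?_
            exact Finset.mem_image.mpr ⟨p, Finset.mem_filter.mpr ⟨Finset.mem_univ _, h1, hx, h2, h3⟩, rfl⟩
  have hcard : W.ncard ≤ XA.card + r + XA.card * r + (r * XA.card) + G.card := by
    have h0 : W.ncard = W.toFinset.card := Set.ncard_eq_toFinset_card' W
    rw [h0]
    refine le_trans (Finset.card_le_card hcover) ?_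
    refine le_trans (Finset.card_union_le _ _) ?_
    have u4 := Finset.card_union_le ((XA.image (Sum.inl : Fin r → VG r)) ∪ ((Finset.univ : Finset (Fin r)).image (fun a => (Sum.inr (a, a) : VG r))) ∪
      ((XA ×ˢ (Finset.univ : Finset (Fin r))).image (Sum.inr : Fin r × Fin r → VG r))) (((Finset.univ : Finset (Fin r)) ×ˢ XA).image (Sum.inr : Fin r × Fin r → VG r))
    have u3 := Finset.card_union_le ((XA.image (Sum.inl : Fin r → VG r)) ∪ ((Finset.univ : Finset (Fin r)).image (fun a => (Sum.inr (a, a) : VG r))))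
      ((XA ×ˢ (Finset.univ : Finset (Fin r))).image (Sum.inr : Fin r × Fin r → VG r))
    have u2 := Finset.card_union_le (XA.image (Sum.inl : Fin r → VG r)) ((Finset.univ : Finset (Fin r)).image (fun a => (Sum.inr (a, a) : VG r)))
    have c1 : (XA.image (Sum.inl : Fin r → VG r)).card ≤ XA.card := Finset.card_image_le
    have c2 : ((Finset.univ : Finset (Fin r)).image (fun a => Sum.inr (a, a) : Fin r → VG r)).card ≤ r := by
      refine le_trans Finset.card_image_le ?_
      simp
    have c3 : ((XA ×ˢ (Finset.univ : Finset (Fin r))).image (Sum.inr : Fin r × Fin r → VG r)).card ≤ XA.card * r := by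
      refine le_trans Finset.card_image_le ?_
      rw [Finset.card_product]
      simp
    have c4 : (((Finset.univ : Finset (Fin r)) ×ˢ XA).image (Sum.inr : Fin r × Fin r → VG r)).card ≤ r * XA.card := by
      refine le_trans Finset.card_image_le ?_
      rw [Finset.card_product]
      simp
    have c5 : (G.image (Sum.inr : Fin r × Fin r → VG r)).card ≤ G.card := Finset.card_image_le
    omega
  have hGbig : k * (4 * r) ≤ G.card := by
    have hXAk : XA.card ≤ k - 1 := by omega
    clear hsmall
    subst hr
    nlinarith [hcard, hW, hXAk, hk]
  obtain ⟨T, hTsub, hTcard, hTdisj⟩ := greedy hr1 k G hGbig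
  have hTmem : ∀ p ∈ T, p.1 ≠ p.2 ∧ Sum.inr p ∈ W ∧ Sum.inl p.1 ∉ W ∧ Sum.inl p.2 ∉ W := by
    intro p hp
    have := hTsub hp
    rw [hG, Finset.mem_filter] at this
    exact this.2
  set F : Fin r × Fin r → VG r × VG r := fun p => (Sum.inl p.1, Sum.inr p) with hF
  have hFinj : Function.Injective F := by
    intro p q h
    rw [hF] at h
    have := congrArg Prod.snd h
    simpa using this
  set M := T.image F with hM
  have hMcard : M.card = k := by
    rw [hM, Finset.card_image_of_injective _ hFinj, hTcard]
  have hind : IsIndMatching (cutRel (EG (r := r)) Y W) M := by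
    constructor
    · intro e he
      rw [hM, Finset.mem_image] at he
      obtain ⟨p, hp, rfl⟩ := he
      obtain ⟨h1, h2, h3, -⟩ := hTmem p hp
      exact ⟨(hWY _).mpr h3, h2, by rw [hF]; exact ⟨rfl, h1⟩⟩
    · intro e he f hf hef x hxe y hyf
      rw [hM, Finset.mem_image] at he hf
      obtain ⟨p, hp, rfl⟩ := he
      obtain ⟨q, hq, rfl⟩ := hf
      have hpq : p ≠ q := fun h => hef (by rw [h])
      obtain ⟨d1, d2, d3, d4⟩ := hTdisj p hp q hq hpq
      rw [hF] at hxe hyf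
      have hEne : x ≠ y ∧ ¬ EG x y := by
        rcases hxe with rfl | rfl <;> rcases hyf with rfl | rfl
        · exact ⟨by simp [d1], EG_ll _ _⟩
        · refine ⟨by simp, ?_⟩
          rw [EG_lr]
          rintro ⟨h, -⟩
          exact d1 h.symm
        · refine ⟨by simp, ?_⟩
          rw [EG_rl]
          rintro ⟨h, -⟩
          exact d3 h
        · exact ⟨by simp [hpq], EG_rr _ _⟩
      exact ⟨hEne.1, fun hD => hEne.2 hD.2.2⟩
  calc k = M.card := hMcard.symm
    _ ≤ nu _ := le_nu hind

lemma lemB {r k : ℕ} (hk : 1 ≤ k) (hr : r = 30 * k) (X : Set (VG r))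
    (h1 : r + r * r ≤ 3 * X.ncard) (h2 : r + r * r ≤ 3 * Xᶜ.ncard) :
    k ≤ bimimCut (EG (r := r)) X := by
  rw [bimimCut]
  by_cases hc1 : {u : Fin r | Sum.inl u ∈ X}.ncard < k
  · have := lemB_case2 hk hr X Xᶜ (fun v => Set.mem_compl_iff X v) h1 hc1
    omega
  · by_cases hc2 : {u : Fin r | Sum.inl u ∈ Xᶜ}.ncard < k
    · have := lemB_case2 hk hr Xᶜ X (fun v => by simp) h2 hc2
      omega
    · push_neg at hc1 hc2
      have hc2' : k ≤ {u : Fin r | Sum.inl u ∉ X}.ncard := by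
        refine le_trans hc2 (le_of_eq ?_)
        congr 1
      have := lemB_case1 X hc1 hc2'
      omega

-- chunk 5 : structural properties of EG
def AG (r : ℕ) : Set (VG r) := Set.range Sum.inl

noncomputable def fG (r : ℕ) : VG r → ℕ := Sum.elim (fun u => (u : ℕ)) (fun _ => 0)

lemma AG_partition {r : ℕ} : ∀ u v : VG r, EG u v →
    (u ∈ AG r ∧ v ∈ (AG r)ᶜ) ∨ (u ∈ (AG r)ᶜ ∧ v ∈ AG r) := by
  intro u v huv
  match u, v with
  | Sum.inl a, Sum.inr p =>
      exact Or.inl ⟨⟨a, rfl⟩, by rintro ⟨b, hb⟩; exact Sum.inl_ne_inr hb⟩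
  | Sum.inr p, Sum.inl a =>
      exact Or.inr ⟨by rintro ⟨b, hb⟩; exact Sum.inl_ne_inr hb, ⟨a, rfl⟩⟩
  | Sum.inl a, Sum.inl b => exact absurd huv (EG_ll a b)
  | Sum.inr p, Sum.inr q => exact absurd huv (EG_rr p q)

lemma fG_injOn {r : ℕ} : Set.InjOn (fG r) (AG r) := by
  rintro x ⟨a, rfl⟩ y ⟨b, rfl⟩ h
  simp only [fG, Sum.elim_inl] at h
  rw [Fin.val_eq_val] at h
  rw [h]

lemma AG_convex_out {r : ℕ} : ∀ b ∈ (AG r)ᶜ, ∀ x ∈ AG r, ∀ y ∈ AG r, ∀ z ∈ AG r,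
    fG r x ≤ fG r y → fG r y ≤ fG r z → EG b x → EG b z → EG b y := by
  rintro b hb x ⟨ux, rfl⟩ y ⟨uy, rfl⟩ z ⟨uz, rfl⟩ hxy hyz hbx hbz
  match b with
  | Sum.inl u => exact absurd ⟨u, rfl⟩ hb
  | Sum.inr p =>
      rw [EG_rl] at hbx hbz ⊢
      have h1 : ux = uz := by rw [← hbx.1, ← hbz.1]
      have h2 : uy = ux := by
        simp only [fG, Sum.elim_inl] at hxy hyz
        have h1' : (ux : ℕ) = (uz : ℕ) := by rw [h1]
        apply Fin.val_injective
        omega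
      rw [h2]
      exact hbx

lemma AG_convex_in {r : ℕ} : ∀ b ∈ (AG r)ᶜ, ∀ x ∈ AG r, ∀ y ∈ AG r, ∀ z ∈ AG r,
    fG r x ≤ fG r y → fG r y ≤ fG r z → EG x b → EG z b → EG y b := by
  rintro b hb x ⟨ux, rfl⟩ y ⟨uy, rfl⟩ z ⟨uz, rfl⟩ hxy hyz hbx hbz
  match b with
  | Sum.inl u => exact absurd ⟨u, rfl⟩ hb
  | Sum.inr p =>
      rw [EG_lr] at hbx hbz ⊢
      have h1 : ux = uz := by rw [← hbx.1, ← hbz.1]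
      have h2 : uy = ux := by
        simp only [fG, Sum.elim_inl] at hxy hyz
        have h1' : (ux : ℕ) = (uz : ℕ) := by rw [h1]
        apply Fin.val_injective
        omega
      rw [h2]
      exact hbx

-- chunk 6 : tree cut sublemmas
open SimpleGraph in
lemma tree_not_reach {L : Type} {T : SimpleGraph L} (hT : T.IsAcyclic) {a b : L}
    (hab : T.Adj a b) : ¬ (T.deleteEdges {s(a, b)}).Reachable a b := by
  have hb := (SimpleGraph.isAcyclic_iff_forall_adj_isBridge.mp hT) hab
  rw [SimpleGraph.isBridge_iff] at hb
  exact hb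

open SimpleGraph in
lemma tree_reach_or {L : Type} {T : SimpleGraph L} (hconn : T.Connected) {a b : L}
    (x : L) : (T.deleteEdges {s(a, b)}).Reachable a x ∨ (T.deleteEdges {s(a, b)}).Reachable b x := by
  have step : ∀ c d : L, T.Adj c d →
      ((T.deleteEdges {s(a, b)}).Reachable a c ∨ (T.deleteEdges {s(a, b)}).Reachable b c) →
      ((T.deleteEdges {s(a, b)}).Reachable a d ∨ (T.deleteEdges {s(a, b)}).Reachable b d) := by
    intro c d hcd hy
    by_cases hedge : s(c, d) = s(a, b)
    · rw [Sym2.eq_iff] at hedge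
      rcases hedge with ⟨rfl, rfl⟩ | ⟨rfl, rfl⟩
      · exact Or.inr (SimpleGraph.Reachable.refl _)
      · exact Or.inl (SimpleGraph.Reachable.refl _)
    · have hadj : (T.deleteEdges {s(a, b)}).Adj c d := by
        rw [SimpleGraph.deleteEdges_adj]
        exact ⟨hcd, by simpa using hedge⟩
      rcases hy with hy | hy
      · exact Or.inl (hy.trans hadj.reachable)
      · exact Or.inr (hy.trans hadj.reachable)
  have key : ∀ (y z : L) (p : T.Walk y z),
      ((T.deleteEdges {s(a, b)}).Reachable a y ∨ (T.deleteEdges {s(a, b)}).Reachable b y) →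
      ((T.deleteEdges {s(a, b)}).Reachable a z ∨ (T.deleteEdges {s(a, b)}).Reachable b z) := by
    intro y z p
    induction p with
    | nil => exact id
    | cons h q ih => exact fun hy => ih (step _ _ h hy)
  obtain ⟨p⟩ := hconn.preconnected a x
  exact key a x p (Or.inl (SimpleGraph.Reachable.refl _))

open SimpleGraph in
lemma tree_leaf_comp {L : Type} {T : SimpleGraph L} {a b : L}
    (hab : T.Adj a b) (hdeg : (T.neighborSet b).ncard = 1) :
    ∀ x, (T.deleteEdges {s(a, b)}).Reachable b x → x = b := by
  have hnb : T.neighborSet b = {a} := by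
    obtain ⟨c, hc⟩ := Set.ncard_eq_one.mp hdeg
    have ha : a ∈ T.neighborSet b := hab.symm
    rw [hc] at ha ⊢
    rw [Set.mem_singleton_iff] at ha
    rw [ha]
  intro x hx
  obtain ⟨p⟩ := hx
  cases p with
  | nil => rfl
  | cons h q =>
      exfalso
      rename_i y
      rw [SimpleGraph.deleteEdges_adj] at h
      have hmem : y ∈ T.neighborSet b := h.1
      rw [hnb, Set.mem_singleton_iff] at hmem
      subst hmem
      exact h.2 (by rw [Sym2.eq_swap]; rfl)

open SimpleGraph in
lemma tree_nest {L : Type} {T : SimpleGraph L} (hT : T.IsAcyclic) {a b u : L}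
    (hab : T.Adj a b) (hbu : T.Adj b u) (hua : u ≠ a) :
    ∀ x, (T.deleteEdges {s(b, u)}).Reachable u x → (T.deleteEdges {s(a, b)}).Reachable b x := by
  intro x hx
  obtain ⟨w⟩ := hx
  have hnb : ¬ (T.deleteEdges {s(b, u)}).Reachable u b := fun h =>
    tree_not_reach hT hbu h.symm
  have hbsup : b ∉ w.support := fun hmem => hnb ⟨w.takeUntil b hmem⟩
  have hedges : ∀ e ∈ w.edges, e ∈ (T.deleteEdges {s(a, b)}).edgeSet := by
    intro e he
    have h1 := w.edges_subset_edgeSet he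
    rw [SimpleGraph.edgeSet_deleteEdges] at h1 ⊢
    refine ⟨h1.1, ?_⟩
    intro hcon
    rw [Set.mem_singleton_iff] at hcon
    subst hcon
    exact hbsup (SimpleGraph.Walk.snd_mem_support_of_mem_edges w he)
  have hadj : (T.deleteEdges {s(a, b)}).Adj b u := by
    rw [SimpleGraph.deleteEdges_adj]
    refine ⟨hbu, ?_⟩
    rw [Set.mem_singleton_iff, Sym2.eq_iff]
    rintro (⟨rfl, rfl⟩ | ⟨-, rfl⟩)
    · exact hab.ne rfl
    · exact hua rfl
  exact hadj.reachable.trans ⟨w.transfer _ hedges⟩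

open SimpleGraph in
lemma tree_decomp {L : Type} {T : SimpleGraph L} {a b u₁ u₂ : L}
    (hab : T.Adj a b) (hnbr : T.neighborSet b = {a, u₁, u₂}) :
    ∀ x, (T.deleteEdges {s(a, b)}).Reachable b x →
      x = b ∨ (T.deleteEdges {s(b, u₁)}).Reachable u₁ x ∨
        (T.deleteEdges {s(b, u₂)}).Reachable u₂ x := by
  intro x hx
  obtain ⟨w0⟩ := hx
  obtain ⟨wp, hp⟩ := w0.toPath
  cases wp with
  | nil => exact Or.inl rfl
  | cons h q =>
      rename_i y
      right
      rw [SimpleGraph.Walk.cons_isPath_iff] at hp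
      have hbq : b ∉ q.support := hp.2
      have hTby := h
      rw [SimpleGraph.deleteEdges_adj] at hTby
      have hymem : y ∈ T.neighborSet b := hTby.1
      rw [hnbr] at hymem
      have hyne : y ≠ a := by
        rintro rfl
        apply hTby.2
        rw [Set.mem_singleton_iff, Sym2.eq_swap]
      have hqtrans : ∀ (u : L), y = u → ∀ e ∈ q.edges, e ∈ (T.deleteEdges {s(b, u)}).edgeSet := by
        rintro u rfl e he
        have h1 := q.edges_subset_edgeSet he
        rw [SimpleGraph.edgeSet_deleteEdges] at h1 ⊢
        refine ⟨h1.1, ?_⟩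
        intro hcon
        rw [Set.mem_singleton_iff] at hcon
        subst hcon
        exact hbq (SimpleGraph.Walk.fst_mem_support_of_mem_edges q he)
      rcases hymem with rfl | rfl | rfl
      · exact absurd rfl hyne
      · exact Or.inl ⟨q.transfer _ (hqtrans _ rfl)⟩
      · exact Or.inr ⟨q.transfer _ (hqtrans _ rfl)⟩

-- chunk 7 : side sets of a branch decomposition
def sideB {V : Type} (bd : BranchDecomp V) (a b : bd.L) : Set V :=
  {v | (bd.T.deleteEdges {s(a, b)}).Reachable b (bd.toLeaf v)}

noncomputable def wB {V : Type} (bd : BranchDecomp V) (a b : bd.L) : ℕ :=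
  (sideB bd a b).ncard

def gammaB {V : Type} (bd : BranchDecomp V) (a b : bd.L) : Set bd.L :=
  {x | (bd.T.deleteEdges {s(a, b)}).Reachable b x}

lemma sideB_eq_side {V : Type} (bd : BranchDecomp V) (a b : bd.L) :
    sideB bd a b = bd.side b a := by
  rw [sideB, BranchDecomp.side, Sym2.eq_swap]

lemma sideB_compl {V : Type} (bd : BranchDecomp V) {a b : bd.L} (hab : bd.T.Adj a b) :
    (sideB bd a b)ᶜ = sideB bd b a := by
  have hgr : bd.T.deleteEdges {s(b, a)} = bd.T.deleteEdges {s(a, b)} := by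
    rw [Sym2.eq_swap]
  ext v
  simp only [Set.mem_compl_iff, sideB, Set.mem_setOf_eq, hgr]
  constructor
  · intro hv
    exact (tree_reach_or bd.isTree.isConnected (a := a) (b := b) (bd.toLeaf v)).resolve_right hv
  · intro hv hcon
    exact tree_not_reach bd.isTree.IsAcyclic hab (hv.trans hcon.symm)

lemma wB_add {V : Type} [Fintype V] (bd : BranchDecomp V) {a b : bd.L} (hab : bd.T.Adj a b) :
    wB bd a b + wB bd b a = Fintype.card V := by
  rw [wB, wB, ← sideB_compl bd hab]
  rw [Set.ncard_add_ncard_compl, Nat.card_eq_fintype_card]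

lemma sideB_nest {V : Type} (bd : BranchDecomp V) {a b u : bd.L}
    (hab : bd.T.Adj a b) (hbu : bd.T.Adj b u) (hua : u ≠ a) :
    sideB bd b u ⊆ sideB bd a b :=
  fun v hv => tree_nest bd.isTree.IsAcyclic hab hbu hua _ hv

lemma gammaB_ssubset {V : Type} (bd : BranchDecomp V) {a b u : bd.L}
    (hab : bd.T.Adj a b) (hbu : bd.T.Adj b u) (hua : u ≠ a) :
    gammaB bd b u ⊂ gammaB bd a b := by
  have hsub : gammaB bd b u ⊆ gammaB bd a b :=
    fun x hx => tree_nest bd.isTree.IsAcyclic hab hbu hua _ hx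
  rw [Set.ssubset_iff_of_subset hsub]
  refine ⟨b, SimpleGraph.Reachable.refl _, ?_⟩
  intro hmem
  exact tree_not_reach bd.isTree.IsAcyclic hbu hmem.symm

lemma sideB_decomp {V : Type} (bd : BranchDecomp V) {a b u₁ u₂ : bd.L}
    (hab : bd.T.Adj a b) (hnbr : bd.T.neighborSet b = {a, u₁, u₂})
    (hdeg3 : (bd.T.neighborSet b).ncard = 3) :
    sideB bd a b ⊆ sideB bd b u₁ ∪ sideB bd b u₂ := by
  intro v hv
  rcases tree_decomp hab hnbr (bd.toLeaf v) hv with heq | h1 | h2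
  · exfalso
    have := bd.mem_leaf v
    rw [heq] at this
    omega
  · exact Or.inl h1
  · exact Or.inr h2

lemma sideB_leaf {V : Type} [Fintype V] (bd : BranchDecomp V) {a b : bd.L}
    (hab : bd.T.Adj a b) (hdeg : (bd.T.neighborSet b).ncard = 1) :
    wB bd a b ≤ 1 := by
  obtain ⟨v0, hv0⟩ := bd.surj b hdeg
  have hsub : sideB bd a b ⊆ {v | bd.toLeaf v = b} := by
    intro v hv
    exact tree_leaf_comp hab hdeg _ hv
  have hset : {v | bd.toLeaf v = b} = {v0} := by
    ext v
    simp only [Set.mem_setOf_eq, Set.mem_singleton_iff]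
    constructor
    · intro h
      exact bd.inj (by rw [h, hv0])
    · rintro rfl
      exact hv0
  calc wB bd a b ≤ ({v | bd.toLeaf v = b} : Set V).ncard :=
        Set.ncard_le_ncard hsub (Set.toFinite _)
    _ = 1 := by rw [hset, Set.ncard_singleton]

lemma nbr_extract {L : Type} {T : SimpleGraph L} {a b : L}
    (h3 : (T.neighborSet b).ncard = 3) (ha : T.Adj b a) :
    ∃ u₁ u₂, T.neighborSet b = {a, u₁, u₂} ∧ u₁ ≠ a ∧ u₂ ≠ a ∧ u₁ ≠ u₂ := by
  obtain ⟨x, y, z, hxy, hxz, hyz, hset⟩ := Set.ncard_eq_three.mp h3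
  have hmem : a ∈ T.neighborSet b := ha
  rw [hset] at hmem
  simp only [Set.mem_insert_iff, Set.mem_singleton_iff] at hmem
  rcases hmem with rfl | rfl | rfl
  · exact ⟨y, z, hset, hxy.symm, hxz.symm, hyz⟩
  · refine ⟨x, z, ?_, hxy, hyz.symm, hxz⟩
    rw [hset, Set.insert_comm]
  · refine ⟨x, y, ?_, hxz, hyz, hxy⟩
    rw [hset]
    rw [show ({x, y, a} : Set L) = {x, a, y} from by rw [Set.pair_comm y a]]
    rw [Set.insert_comm]

-- chunk 8 : every branch decomposition has a balanced cut
lemma lemA {V : Type} [Fintype V] (bd : BranchDecomp V) (hV : 3 ≤ Fintype.card V) :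
    ∃ t₁ t₂ : bd.L, bd.T.Adj t₁ t₂ ∧ Fintype.card V ≤ 3 * (bd.side t₁ t₂).ncard ∧
      Fintype.card V ≤ 3 * ((bd.side t₁ t₂)ᶜ).ncard := by
  classical
  haveI : Finite bd.L := bd.finL
  haveI : Fintype bd.L := Fintype.ofFinite _
  set N := Fintype.card V with hN
  set K : ℕ := Fintype.card bd.L + 1 with hK
  have hgbnd : ∀ x y : bd.L, (gammaB bd x y).ncard ≤ Fintype.card bd.L := by
    intro x y
    have h1 := Set.ncard_le_ncard (Set.subset_univ (gammaB bd x y)) Set.finite_univ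
    rwa [Set.ncard_univ, Nat.card_eq_fintype_card] at h1
  set Maj : Set (bd.L × bd.L) := {p | bd.T.Adj p.1 p.2 ∧ N ≤ 2 * wB bd p.1 p.2} with hMaj
  have hMajne : Maj.Nonempty := by
    have hcard2 : 1 < Fintype.card bd.L := by
      have := bd.two_le
      rw [Nat.card_eq_fintype_card] at this
      omega
    obtain ⟨x, y, hxy⟩ := Fintype.exists_pair_of_one_lt_card hcard2
    obtain ⟨p⟩ := bd.isTree.isConnected.preconnected x y
    have hadj : ∃ c d : bd.L, bd.T.Adj c d := by
      cases p with
      | nil => exact absurd rfl hxy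
      | cons h q => exact ⟨_, _, h⟩
    obtain ⟨c, d, hcd⟩ := hadj
    have hsum := wB_add bd hcd
    by_cases hcase : N ≤ 2 * wB bd c d
    · refine ⟨(c, d), ?_⟩
      show bd.T.Adj c d ∧ N ≤ 2 * wB bd c d
      exact ⟨hcd, hcase⟩
    · refine ⟨(d, c), ?_⟩
      show bd.T.Adj d c ∧ N ≤ 2 * wB bd d c
      exact ⟨hcd.symm, by omega⟩
  obtain ⟨⟨a, b⟩, hab_mem, hmin⟩ := Set.exists_min_image Maj
    (fun p => K * wB bd p.1 p.2 + (gammaB bd p.1 p.2).ncard) (Set.toFinite _) hMajne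
  obtain ⟨hab, hmaj⟩ := hab_mem
  simp only at hab hmaj hmin
  have hsumab := wB_add bd hab
  refine ⟨b, a, hab.symm, ?_, ?_⟩
  · rw [← sideB_eq_side]
    have : wB bd a b = (sideB bd a b).ncard := rfl
    omega
  · rw [← sideB_eq_side, sideB_compl bd hab]
    have heq : wB bd b a = (sideB bd b a).ncard := rfl
    rw [← heq]
    by_contra hcon
    push_neg at hcon
    have hcon' : 2 * N < 3 * wB bd a b := by omega
    -- b cannot be a leaf of the tree
    rcases bd.subcubic b with hdeg1 | hdeg3
    · have := sideB_leaf bd hab hdeg1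
      have hwab : wB bd a b ≤ 1 := this
      omega
    · obtain ⟨u₁, u₂, hnbr, h1a, h2a, h12⟩ := nbr_extract hdeg3 hab.symm
      have hadj1 : bd.T.Adj b u₁ := by
        have : u₁ ∈ bd.T.neighborSet b := by
          rw [hnbr]
          simp
        exact this
      have hadj2 : bd.T.Adj b u₂ := by
        have : u₂ ∈ bd.T.neighborSet b := by
          rw [hnbr]
          simp
        exact this
      have hdecsub := sideB_decomp bd hab hnbr hdeg3
      have hsum12 : wB bd a b ≤ wB bd b u₁ + wB bd b u₂ := by
        calc wB bd a b ≤ (sideB bd b u₁ ∪ sideB bd b u₂).ncard :=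
              Set.ncard_le_ncard hdecsub (Set.toFinite _)
          _ ≤ wB bd b u₁ + wB bd b u₂ := Set.ncard_union_le _ _
      have key : ∀ u : bd.L, bd.T.Adj b u → u ≠ a → wB bd a b ≤ 2 * wB bd b u → False := by
        intro u hbu hua hwu
        have hnest : wB bd b u ≤ wB bd a b :=
          Set.ncard_le_ncard (sideB_nest bd hab hbu hua) (Set.toFinite _)
        have hgss : (gammaB bd b u).ncard < (gammaB bd a b).ncard :=
          Set.ncard_lt_ncard (gammaB_ssubset bd hab hbu hua) (Set.toFinite _)
        have hg1 := hgbnd a b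
        have hg2 := hgbnd b u
        by_cases hmaj1 : N ≤ 2 * wB bd b u
        · have hmem2 : (b, u) ∈ Maj := by
            show bd.T.Adj b u ∧ N ≤ 2 * wB bd b u
            exact ⟨hbu, hmaj1⟩
          have hminle := hmin (b, u) hmem2
          simp only at hminle
          rcases lt_or_eq_of_le hnest with hlt | heq2
          · have hmul : K * (wB bd b u + 1) ≤ K * wB bd a b :=
              Nat.mul_le_mul_left K (by omega)
            have hexp : K * (wB bd b u + 1) = K * wB bd b u + K := by ring
            omega
          · have hKeq : K * wB bd b u = K * wB bd a b := by rw [heq2]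
            omega
        · push_neg at hmaj1
          have hrev := wB_add bd hbu
          have hmajrev : N ≤ 2 * wB bd u b := by omega
          have hlt : wB bd u b < wB bd a b := by omega
          have hmem2 : (u, b) ∈ Maj := by
            show bd.T.Adj u b ∧ N ≤ 2 * wB bd u b
            exact ⟨hbu.symm, hmajrev⟩
          have hminle := hmin (u, b) hmem2
          simp only at hminle
          have hmul : K * (wB bd u b + 1) ≤ K * wB bd a b :=
            Nat.mul_le_mul_left K (by omega)
          have hexp : K * (wB bd u b + 1) = K * wB bd u b + K := by ring
          have hg3 := hgbnd u b
          omega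
      rcases le_total (wB bd b u₂) (wB bd b u₁) with hle | hle
      · exact key u₁ hadj1 h1a (by omega)
      · exact key u₂ hadj2 h2a (by omega)

-- chunk 9 : caterpillar tree
abbrev catL (s : ℕ) : Type := Fin (s + 2) ⊕ Fin s

def att (s a j : ℕ) : Prop := (a = 0 ∧ j = 0) ∨ a = j + 1 ∨ (a = s + 1 ∧ j + 1 = s)

def catR (s : ℕ) : catL s → catL s → Prop
  | .inr i, .inr j => (j : ℕ) = (i : ℕ) + 1
  | .inl a, .inr j => att s (a : ℕ) (j : ℕ)
  | _, _ => False

def catG (s : ℕ) : SimpleGraph (catL s) where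
  Adj x y := catR s x y ∨ catR s y x
  symm := by
    constructor
    intro x y h
    tauto
  loopless := by
    constructor
    intro x h
    have hc : ¬ catR s x x := by
      match x with
      | Sum.inl a => exact fun h => h
      | Sum.inr i => exact fun h => by simp [catR] at h
    tauto

lemma adj_rr {s : ℕ} (i j : Fin s) :
    (catG s).Adj (Sum.inr i) (Sum.inr j) ↔ ((j : ℕ) = (i : ℕ) + 1 ∨ (i : ℕ) = (j : ℕ) + 1) :=
  Iff.rfl

lemma adj_lr {s : ℕ} (a : Fin (s + 2)) (j : Fin s) :
    (catG s).Adj (Sum.inl a) (Sum.inr j) ↔ att s (a : ℕ) (j : ℕ) := by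
  constructor
  · rintro (h | h)
    · exact h
    · exact absurd h (fun hh => hh)
  · exact fun h => Or.inl h

lemma adj_ll {s : ℕ} (a b : Fin (s + 2)) : ¬ (catG s).Adj (Sum.inl a) (Sum.inl b) := by
  rintro (h | h) <;> exact h

def jfun {s : ℕ} (hs : 1 ≤ s) (a : Fin (s + 2)) : Fin s :=
  if _ : (a : ℕ) = 0 then ⟨0, hs⟩
  else if h2 : (a : ℕ) ≤ s then ⟨(a : ℕ) - 1, by omega⟩
  else ⟨s - 1, by omega⟩

lemma att_iff {s : ℕ} (hs : 1 ≤ s) (a : Fin (s + 2)) (j : Fin s) :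
    att s (a : ℕ) (j : ℕ) ↔ j = jfun hs a := by
  have haval : (a : ℕ) < s + 2 := a.isLt
  have hjval : (j : ℕ) < s := j.isLt
  rw [Fin.ext_iff]
  unfold jfun att
  split_ifs with h1 h2 <;> simp only [] <;> omega

lemma att_jfun {s : ℕ} (hs : 1 ≤ s) (a : Fin (s + 2)) :
    att s (a : ℕ) ((jfun hs a : Fin s) : ℕ) :=
  (att_iff hs a (jfun hs a)).mpr rfl

lemma nbhd_leaf {s : ℕ} (hs : 1 ≤ s) (a : Fin (s + 2)) :
    (catG s).neighborSet (Sum.inl a) = {Sum.inr (jfun hs a)} := by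
  ext y
  match y with
  | Sum.inl b =>
      simp only [SimpleGraph.mem_neighborSet, Set.mem_singleton_iff]
      constructor
      · intro h
        exact absurd h (adj_ll a b)
      · intro h
        exact absurd h (by simp)
  | Sum.inr j =>
      simp only [SimpleGraph.mem_neighborSet, Set.mem_singleton_iff, adj_lr]
      exact (att_iff hs a j).trans ⟨fun h => by rw [h], fun h => Sum.inr.inj h⟩

lemma nbhd_leaf_ncard {s : ℕ} (hs : 1 ≤ s) (a : Fin (s + 2)) :
    ((catG s).neighborSet (Sum.inl a)).ncard = 1 := by
  rw [nbhd_leaf hs a, Set.ncard_singleton]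

-- chunk 10 : spine neighborhoods
lemma inl_eq_inl {s : ℕ} (a b : Fin (s + 2)) :
    ((Sum.inl a : catL s) = Sum.inl b) ↔ (a : ℕ) = (b : ℕ) :=
  ⟨fun h => by rw [Sum.inl.inj h], fun h => congrArg Sum.inl (Fin.val_injective h)⟩

lemma inr_eq_inr {s : ℕ} (i j : Fin s) :
    ((Sum.inr i : catL s) = Sum.inr j) ↔ (i : ℕ) = (j : ℕ) :=
  ⟨fun h => by rw [Sum.inr.inj h], fun h => congrArg Sum.inr (Fin.val_injective h)⟩

lemma inl_eq_inr_iff {s : ℕ} (a : Fin (s + 2)) (i : Fin s) :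
    ((Sum.inl a : catL s) = Sum.inr i) ↔ False :=
  ⟨fun h => Sum.inl_ne_inr h, False.elim⟩

lemma inr_eq_inl_iff {s : ℕ} (a : Fin (s + 2)) (i : Fin s) :
    ((Sum.inr i : catL s) = Sum.inl a) ↔ False :=
  ⟨fun h => Sum.inr_ne_inl h, False.elim⟩

def n1 {s : ℕ} (hs : 1 ≤ s) (j : Fin s) : catL s :=
  if _ : (j : ℕ) = 0 then Sum.inl ⟨0, by omega⟩ else Sum.inr ⟨(j : ℕ) - 1, by omega⟩

def n2 {s : ℕ} (j : Fin s) : catL s := Sum.inl ⟨(j : ℕ) + 1, by omega⟩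

def n3 {s : ℕ} (j : Fin s) : catL s :=
  if h : (j : ℕ) + 1 < s then Sum.inr ⟨(j : ℕ) + 1, h⟩ else Sum.inl ⟨s + 1, by omega⟩

lemma nbhd_spine {s : ℕ} (hs : 1 ≤ s) (j : Fin s) :
    (catG s).neighborSet (Sum.inr j) = {n1 hs j, n2 j, n3 j} := by
  have hj := j.isLt
  ext y
  simp only [SimpleGraph.mem_neighborSet, Set.mem_insert_iff, Set.mem_singleton_iff]
  match y with
  | Sum.inl a =>
      have ha := a.isLt
      rw [(catG s).adj_comm, adj_lr]
      unfold att n1 n2 n3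
      split_ifs with h1 h2 <;>
        simp only [inl_eq_inl, inr_eq_inr, inl_eq_inr_iff, inr_eq_inl_iff, Fin.val_mk,
          false_or, or_false, iff_false, Fin.val_zero] <;> omega
  | Sum.inr i =>
      have hi := i.isLt
      rw [adj_rr]
      unfold n1 n2 n3
      split_ifs with h1 h2 <;>
        simp only [inl_eq_inl, inr_eq_inr, inl_eq_inr_iff, inr_eq_inl_iff, Fin.val_mk,
          false_or, or_false, iff_false, Fin.val_zero] <;> omega

lemma nbhd_spine_ncard {s : ℕ} (hs : 1 ≤ s) (j : Fin s) :
    ((catG s).neighborSet (Sum.inr j)).ncard = 3 := by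
  have hj := j.isLt
  have h12 : n1 hs j ≠ n2 j := by
    unfold n1 n2
    split_ifs with h1 <;>
        simp only [ne_eq, inl_eq_inl, inr_eq_inr, inl_eq_inr_iff, inr_eq_inl_iff, Fin.val_mk,
          false_or, or_false, iff_false, not_false_iff, Fin.val_zero, not_true_eq_false] <;> omega
  have h13 : n1 hs j ≠ n3 j := by
    unfold n1 n3
    split_ifs with h1 h2 h2 <;>
        simp only [ne_eq, inl_eq_inl, inr_eq_inr, inl_eq_inr_iff, inr_eq_inl_iff, Fin.val_mk,
          false_or, or_false, iff_false, not_false_iff, Fin.val_zero, not_true_eq_false] <;> omega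
  have h23 : n2 j ≠ n3 j := by
    unfold n2 n3
    split_ifs with h1 <;>
        simp only [ne_eq, inl_eq_inl, inr_eq_inr, inl_eq_inr_iff, inr_eq_inl_iff, Fin.val_mk,
          false_or, or_false, iff_false, not_false_iff, Fin.val_zero, not_true_eq_false] <;> omega
  rw [nbhd_spine hs j]
  rw [Set.ncard_insert_of_notMem (by simp [h12, h13]) (Set.toFinite _),
    Set.ncard_insert_of_notMem (by simp [h23]) (Set.toFinite _), Set.ncard_singleton]

-- chunk 11 : caterpillar is a tree; branch decomposition exists
lemma cut_reach {L : Type} {H : SimpleGraph L} (f : L → Bool)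
    (hf : ∀ x y, H.Adj x y → f x = f y) {x y : L} (h : H.Reachable x y) : f x = f y := by
  obtain ⟨p⟩ := h
  induction p with
  | nil => rfl
  | cons hadj q ih => exact (hf _ _ hadj).trans ih

lemma cat_connected (s : ℕ) (hs : 1 ≤ s) : (catG s).Connected := by
  have hspine : ∀ (n : ℕ) (hn : n < s), (catG s).Reachable (Sum.inr ⟨0, hs⟩) (Sum.inr ⟨n, hn⟩) := by
    intro n
    induction n with
    | zero => intro hn; exact SimpleGraph.Reachable.refl _
    | succ n ih =>
        intro hn
        have hn' : n < s := by omega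
        refine (ih hn').trans ?_
        have hadj : (catG s).Adj (Sum.inr ⟨n, hn'⟩) (Sum.inr ⟨n + 1, hn⟩) := Or.inl rfl
        exact hadj.reachable
  have hall : ∀ x : catL s, (catG s).Reachable (Sum.inr ⟨0, hs⟩) x := by
    intro x
    match x with
    | Sum.inr j => exact hspine j.1 j.2
    | Sum.inl a =>
        refine (hspine (jfun hs a).1 (jfun hs a).2).trans ?_
        have hadj : (catG s).Adj (Sum.inl a) (Sum.inr (jfun hs a)) :=
          (adj_lr _ _).mpr (att_jfun hs a)
        exact hadj.symm.reachable
  haveI : Nonempty (catL s) := ⟨Sum.inr ⟨0, hs⟩⟩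
  exact ⟨fun x y => (hall x).symm.trans (hall y)⟩

lemma cat_acyclic (s : ℕ) (hs : 1 ≤ s) : (catG s).IsAcyclic := by
  rw [SimpleGraph.isAcyclic_iff_forall_adj_isBridge]
  suffices aux : ∀ v w : catL s, catR s v w →
      ¬ ((catG s).deleteEdges {s(v, w)}).Reachable v w by
    intro v w hvw
    rw [SimpleGraph.isBridge_iff]
    rcases hvw with h | h
    · exact aux v w h
    · intro hreach
      apply aux w v h
      have hgr : (catG s).deleteEdges {s(w, v)} = (catG s).deleteEdges {s(v, w)} := by
        rw [Sym2.eq_swap]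
      rw [hgr]
      exact hreach.symm
  intro v w hcr hreach
  match v, w with
  | Sum.inl a, Sum.inl b => exact hcr
  | Sum.inr i, Sum.inl a => exact hcr
  | Sum.inl a, Sum.inr j =>
      have hj : j = jfun hs a := (att_iff hs a j).mp hcr
      subst hj
      have hcut : ∀ x y : catL s,
          ((catG s).deleteEdges {s(Sum.inl a, Sum.inr (jfun hs a))}).Adj x y →
          (decide (x = Sum.inl a)) = (decide (y = Sum.inl a)) := by
        intro x y hxy
        rw [SimpleGraph.deleteEdges_adj] at hxy
        obtain ⟨hadj, hne⟩ := hxy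
        rw [Set.mem_singleton_iff] at hne
        by_cases hx : x = Sum.inl a
        · by_cases hy : y = Sum.inl a
          · rw [hx, hy]
          · exfalso
            subst hx
            match y with
            | Sum.inl b => exact adj_ll a b hadj
            | Sum.inr j' =>
                have hj' : j' = jfun hs a := (att_iff hs a j').mp ((adj_lr a j').mp hadj)
                subst hj'
                exact hne rfl
        · by_cases hy : y = Sum.inl a
          · exfalso
            subst hy
            match x with
            | Sum.inl b => exact adj_ll a b hadj.symm
            | Sum.inr j' =>
                have hj' : j' = jfun hs a := (att_iff hs a j').mp ((adj_lr a j').mp hadj.symm)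
                subst hj'
                exact hne (Sym2.eq_swap)
          · rw [decide_eq_false hx, decide_eq_false hy]
      have := cut_reach _ hcut hreach
      simp at this
  | Sum.inr i, Sum.inr j =>
      have hij : (j : ℕ) = (i : ℕ) + 1 := hcr
      set g : catL s → ℕ := Sum.elim (fun a => ((jfun hs a : Fin s) : ℕ)) (fun t => (t : ℕ)) with hg
      have hclaim : ∀ x y : catL s, catR s x y → s(x, y) ≠ s((Sum.inr i : catL s), Sum.inr j) →
          (decide (g x ≤ (i : ℕ))) = (decide (g y ≤ (i : ℕ))) := by
        intro x y hxy hne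
        match x, y with
        | Sum.inl b, Sum.inl c => exact absurd hxy (fun h => h)
        | Sum.inr t, Sum.inl c => exact absurd hxy (fun h => h)
        | Sum.inl b, Sum.inr t =>
            have ht : t = jfun hs b := (att_iff hs b t).mp hxy
            subst ht
            simp [hg]
        | Sum.inr t, Sum.inr t' =>
            have ht' : (t' : ℕ) = (t : ℕ) + 1 := hxy
            simp only [hg, Sum.elim_inr]
            by_cases hcase : (t' : ℕ) ≤ (i : ℕ)
            · have : (t : ℕ) ≤ (i : ℕ) := by omega
              simp [hcase, this]
            · by_cases hcase2 : (t : ℕ) ≤ (i : ℕ)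
              · exfalso
                have hti : (t : ℕ) = (i : ℕ) := by omega
                have ht'j : (t' : ℕ) = (j : ℕ) := by omega
                apply hne
                rw [Fin.val_injective hti, Fin.val_injective ht'j]
              · simp [hcase, hcase2]
      have hcut : ∀ x y : catL s,
          ((catG s).deleteEdges {s((Sum.inr i : catL s), Sum.inr j)}).Adj x y →
          (decide (g x ≤ (i : ℕ))) = (decide (g y ≤ (i : ℕ))) := by
        intro x y hxy
        rw [SimpleGraph.deleteEdges_adj] at hxy
        obtain ⟨hadj, hne⟩ := hxy
        rw [Set.mem_singleton_iff] at hne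
        rcases hadj with h | h
        · exact hclaim x y h hne
        · refine (hclaim y x h ?_).symm
          rw [Sym2.eq_swap] at hne
          intro hcon
          apply hne
          rw [← hcon, Sym2.eq_swap]
      have := cut_reach _ hcut hreach
      simp only [hg, Sum.elim_inr] at this
      rw [decide_eq_decide] at this
      omega

lemma exists_branchDecomp (V : Type) [Fintype V] (h3 : 3 ≤ Fintype.card V) :
    Nonempty (BranchDecomp V) := by
  set s := Fintype.card V - 2 with hsdef
  have hs : 1 ≤ s := by omega
  have hcard : Fintype.card V = s + 2 := by omega
  have e : V ≃ Fin (s + 2) := Fintype.equivFinOfCardEq hcard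
  refine ⟨{
    L := catL s
    finL := inferInstance
    T := catG s
    isTree := ⟨cat_connected s hs, cat_acyclic s hs⟩
    two_le := by
      rw [Nat.card_eq_fintype_card]
      simp only [Fintype.card_sum, Fintype.card_fin]
      omega
    subcubic := by
      intro t
      match t with
      | Sum.inl a => exact Or.inl (nbhd_leaf_ncard hs a)
      | Sum.inr j => exact Or.inr (nbhd_spine_ncard hs j)
    toLeaf := fun v => Sum.inl (e v)
    inj := fun v w h => e.injective (Sum.inl.inj h)
    mem_leaf := fun v => nbhd_leaf_ncard hs (e v)
    surj := by
      intro t ht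
      match t with
      | Sum.inl a => exact ⟨e.symm a, by simp⟩
      | Sum.inr j =>
          rw [nbhd_spine_ncard hs j] at ht
          omega
  }⟩

theorem stmt_14 (k : ℕ) (hk : 1 ≤ k) :
    ∃ (V : Type) (_ : Fintype V) (E : V → V → Prop) (A : Set V) (f : V → ℕ),
      (∀ u v, E u v → (u ∈ A ∧ v ∈ Aᶜ) ∨ (u ∈ Aᶜ ∧ v ∈ A)) ∧
        Set.InjOn f A ∧
        (∀ b ∈ Aᶜ, ∀ x ∈ A, ∀ y ∈ A, ∀ z ∈ A,
          f x ≤ f y → f y ≤ f z → E b x → E b z → E b y) ∧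
        (∀ b ∈ Aᶜ, ∀ x ∈ A, ∀ y ∈ A, ∀ z ∈ A,
          f x ≤ f y → f y ≤ f z → E x b → E z b → E y b) ∧
        k ≤ bimimw E := by
  set r := 30 * k with hr
  have hr30 : 30 ≤ r := by omega
  have hcardV : Fintype.card (VG r) = r + r * r := by
    simp [Fintype.card_sum, Fintype.card_prod]
  have h3 : 3 ≤ Fintype.card (VG r) := by
    rw [hcardV]
    nlinarith
  refine ⟨VG r, inferInstance, EG, AG r, fG r, AG_partition, fG_injOn,
    AG_convex_out, AG_convex_in, ?_⟩
  rw [bimimw]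
  obtain ⟨bd0⟩ := exists_branchDecomp (VG r) h3
  have hne : {n | ∃ bd : BranchDecomp (VG r), bd.width (EG (r := r)) = n}.Nonempty :=
    ⟨bd0.width EG, bd0, rfl⟩
  apply le_csInf hne
  rintro n ⟨bd, rfl⟩
  obtain ⟨t₁, t₂, hadj, hb1, hb2⟩ := lemA bd h3
  rw [hcardV] at hb1 hb2
  have hkc : k ≤ bimimCut (EG (r := r)) (bd.side t₁ t₂) := lemB hk hr (bd.side t₁ t₂) hb1 hb2
  have hbdd : BddAbove {n | ∃ a b, bd.T.Adj a b ∧ n = bimimCut (EG (r := r)) (bd.side a b)} := by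
    refine ⟨2 * Fintype.card (VG r × VG r), ?_⟩
    rintro n ⟨a, b, -, rfl⟩
    rw [bimimCut]
    have h1 := nu_le_card (cutRel (EG (r := r)) (bd.side a b) (bd.side a b)ᶜ)
    have h2 := nu_le_card (cutRel (EG (r := r)) (bd.side a b)ᶜ (bd.side a b))
    omega
  have hmem : bimimCut (EG (r := r)) (bd.side t₁ t₂) ∈
      {n | ∃ a b, bd.T.Adj a b ∧ n = bimimCut (EG (r := r)) (bd.side a b)} :=
    ⟨t₁, t₂, hadj, rfl⟩
  have hle := le_csSup hbdd hmem
  rw [BranchDecomp.width]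
  exact le_trans hkc hle
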